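/- Conversely, Verheul verification is sound over a field: if R is a field, G₁ is one-dimensional with nonzero generator g, ε is a nondegenerate bilinear map into a one-dimensional space, and a pair (P, S) in G₁ × G₁ satisfies ε(P, s • v) = ε(S, v) for the system key s and generator v : G₂ with ε(g, v) ≠ 0, then S = s • P; i.e., any certificate passing verification is a valid signature on P. -/
import Mathlib


theorem stmt15 {R G₁ G₂ F : Type*} [Field R]
    [AddCommGroup G₁] [Module R G₁] [AddCommGroup G₂] [Module R G₂]
    [AddCommGroup F] [Module R F] [NoZeroSMulDivisors R F]
    (ε : G₁ →ₗ[R] G₂ →ₗ[R] F) (g : G₁) (v : G₂)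
    (hnd : ε g v ≠ 0)
    (hgen : ∀ P : G₁, ∃ p : R, P = p • g)
    (s : R) (P S : G₁)
    (hver : ε P (s • v) = ε S v) :
    S = s • P := by
  obtain ⟨p, hp⟩ := hgen P
  obtain ⟨q, hq⟩ := hgen S
  subst hp hq
  simp only [map_smul, LinearMap.smul_apply, smul_smul] at hver ⊢
  have : (p * s) • ε g v = q • ε g v := by
    rw [← hver]; rw [mul_comm, mul_smul]
  have hq : q = p * s := (smul_left_injective R hnd this.symm)
  rw [hq, mul_comm, mul_smul]
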